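/- arXiv:math/0604454 — 2 statements merged into one kernel-verified Lean document; each statement's English description precedes it below -/
import Mathlib

section
/- Let K be a max cone in ℝ≥0^n, let T be a set of generators for K, let U ⊆ T and S = T \ U. Then S generates K if and only if every u ∈ T satisfies: for each j ∈ supp(u) there exists x ∈ S with j ∈ supp(x) such that x(j) ≤ u(j) (componentwise). -/
open scoped NNReal

/-- The max-algebraic span of `S`: all vectors `⨆_{x ∈ S} λ_x • x` where only
finitely many coefficients `λ_x` are nonzero (`MaxSpan ∅ = {0}`). -/
def MaxSpan {n : ℕ} (S : Set (Fin n → ℝ≥0)) : Set (Fin n → ℝ≥0) :=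
  {u | ∃ (F : Finset (Fin n → ℝ≥0)) (lam : (Fin n → ℝ≥0) → ℝ≥0),
    ↑F ⊆ S ∧ u = F.sup (fun x => lam x • x)}

/-- A max cone: a subset of `ℝ≥0ⁿ` closed under pointwise max `⊔` and under
multiplication by nonnegative scalars. -/
def MaxCone {n : ℕ} (K : Set (Fin n → ℝ≥0)) : Prop :=
  0 ∈ K ∧ (∀ x ∈ K, ∀ y ∈ K, x ⊔ y ∈ K) ∧ (∀ (c : ℝ≥0), ∀ x ∈ K, c • x ∈ K)

/-- `u` is an extremal in `K` if `u = v ⊔ w` with `v, w ∈ K` implies `u = v` or `u = w`. -/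
def IsExtremal {n : ℕ} (K : Set (Fin n → ℝ≥0)) (u : Fin n → ℝ≥0) : Prop :=
  u ∈ K ∧ ∀ v ∈ K, ∀ w ∈ K, u = v ⊔ w → u = v ∨ u = w

/-- A vector is scaled if its max norm `⨆ i, x i` equals `1`. -/
def Scaled {n : ℕ} (x : Fin n → ℝ≥0) : Prop := (⨆ i, x i) = 1

/-- The support of a vector. -/
def supp {n : ℕ} (v : Fin n → ℝ≥0) : Set (Fin n) := {j | 0 < v j}

/-- For `j ∈ supp u`, `rescale u j = (1 / u j) • u`, the `j`-scaling `u(j)`. -/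
noncomputable def rescale {n : ℕ} (u : Fin n → ℝ≥0) (j : Fin n) : Fin n → ℝ≥0 :=
  (u j)⁻¹ • u

/-- `T(j) = {u(j) : u ∈ T, j ∈ supp u}`. -/
noncomputable def setScale {n : ℕ} (T : Set (Fin n → ℝ≥0)) (j : Fin n) :
    Set (Fin n → ℝ≥0) :=
  {y | ∃ u ∈ T, j ∈ supp u ∧ y = rescale u j}

/-- `u` is minimal in `T` if `v ∈ T` and `v ≤ u` imply `v = u`. -/
def MinimalIn {n : ℕ} (T : Set (Fin n → ℝ≥0)) (u : Fin n → ℝ≥0) : Prop :=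
  u ∈ T ∧ ∀ v ∈ T, v ≤ u → v = u

/-- A set is totally dependent if each of its elements is a max combination of
the remaining ones. -/
def TotallyDependent {n : ℕ} (S : Set (Fin n → ℝ≥0)) : Prop :=
  ∀ x ∈ S, x ∈ MaxSpan (S \ {x})

/-- A set is independent if none of its elements is a max combination of
the remaining ones. -/
def IndependentSet {n : ℕ} (S : Set (Fin n → ℝ≥0)) : Prop :=
  ∀ x ∈ S, x ∉ MaxSpan (S \ {x})

/-- A basis for `K` is an independent set of generators for `K`. -/
def IsBasis {n : ℕ} (S K : Set (Fin n → ℝ≥0)) : Prop :=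
  IndependentSet S ∧ MaxSpan S = K

lemma maxSpan_mono {n : ℕ} {S T : Set (Fin n → ℝ≥0)} (h : S ⊆ T) :
    MaxSpan S ⊆ MaxSpan T := by
  rintro u ⟨F, lam, hFS, hu⟩
  exact ⟨F, lam, hFS.trans h, hu⟩

lemma mem_maxSpan_self {n : ℕ} {S : Set (Fin n → ℝ≥0)} {u : Fin n → ℝ≥0}
    (hu : u ∈ S) : u ∈ MaxSpan S := by
  refine ⟨{u}, fun _ => 1, by simpa, ?_⟩
  rw [Finset.sup_singleton]
  funext i
  exact (one_mul (u i)).symm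

lemma mem_maxSpan_iff {n : ℕ} (S : Set (Fin n → ℝ≥0)) (u : Fin n → ℝ≥0) :
    u ∈ MaxSpan S ↔
      ∀ j ∈ supp u, ∃ x ∈ S, j ∈ supp x ∧ rescale x j ≤ rescale u j := by
  constructor
  · rintro ⟨F, lam, hFS, hu⟩ j hj
    have hj' : (0 : ℝ≥0) < F.sup (fun x => lam x * x j) := by
      have : (0 : ℝ≥0) < u j := hj
      rw [hu, Finset.sup_apply] at this
      simpa using this
    have hF : F.Nonempty := by
      rw [Finset.lt_sup_iff] at hj'
      obtain ⟨x, hxF, _⟩ := hj'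
      exact ⟨x, hxF⟩
    obtain ⟨y, hyF, hy_eq⟩ := Finset.exists_mem_eq_sup F hF (fun x => lam x * x j)
    have hval : u j = lam y * y j := by
      rw [hu, Finset.sup_apply]; simpa using hy_eq
    have hpos : (0 : ℝ≥0) < lam y * y j := hval ▸ hj
    have hlam : lam y ≠ 0 := by
      intro h; rw [h, zero_mul] at hpos; exact lt_irrefl _ hpos
    have hyj : (0 : ℝ≥0) < y j := by
      rcases eq_or_lt_of_le (zero_le : (0:ℝ≥0) ≤ y j) with h | h
      · rw [← h, mul_zero] at hpos; exact absurd hpos (lt_irrefl _)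
      · exact h
    refine ⟨y, hFS hyF, hyj, ?_⟩
    intro k
    show (y j)⁻¹ * y k ≤ (u j)⁻¹ * u k
    have hk : lam y * y k ≤ u k := by
      have h1 : lam y • y ≤ F.sup (fun x => lam x • x) := Finset.le_sup (f := fun x => lam x • x) hyF
      have := h1 k
      rw [← hu] at this
      simpa using this
    have heq : (y j)⁻¹ * y k = (u j)⁻¹ * (lam y * y k) := by
      rw [hval, mul_inv, mul_mul_mul_comm, inv_mul_cancel₀ hlam, one_mul]
    rw [heq]
    exact mul_le_mul_right hk _
  · intro h
    classical
    have h' : ∀ j : Fin n, ∃ x : Fin n → ℝ≥0,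
        0 < u j → x ∈ S ∧ 0 < x j ∧ rescale x j ≤ rescale u j := by
      intro j
      by_cases hj : 0 < u j
      · obtain ⟨x, hxS, hxj, hle⟩ := h j hj
        exact ⟨x, fun _ => ⟨hxS, hxj, hle⟩⟩
      · exact ⟨0, fun hj' => absurd hj' hj⟩
    choose X hX using h'
    set t : Finset (Fin n) := Finset.univ.filter (fun j => 0 < u j) with ht
    refine ⟨t.image X,
      fun y => (t.filter (fun j => X j = y)).sup (fun j => u j / X j j), ?_, ?_⟩
    · intro y hy
      simp only [Finset.coe_image, Set.mem_image, Finset.mem_coe] at hy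
      obtain ⟨j, hjt, rfl⟩ := hy
      have hj : 0 < u j := by
        rw [ht] at hjt; exact (Finset.mem_filter.1 hjt).2
      exact (hX j hj).1
    · funext k
      rw [Finset.sup_apply]
      show u k = (t.image X).sup
        (fun y => ((t.filter (fun j => X j = y)).sup fun j => u j / X j j) * y k)
      apply le_antisymm
      · by_cases hk : 0 < u k
        · have hkt : k ∈ t := by simp [ht, hk]
          have hXk := hX k hk
          have hmem : k ∈ t.filter (fun j => X j = X k) :=
            Finset.mem_filter.2 ⟨hkt, rfl⟩
          have h1 : u k / X k k ≤
              (t.filter (fun j => X j = X k)).sup (fun j => u j / X j j) :=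
            Finset.le_sup (f := fun j => u j / X j j) hmem
          have h2 : u k / X k k * X k k = u k :=
            div_mul_cancel₀ _ (ne_of_gt hXk.2.1)
          calc u k = u k / X k k * X k k := h2.symm
            _ ≤ (t.filter (fun j => X j = X k)).sup (fun j => u j / X j j) * X k k :=
                mul_le_mul_left h1 _
            _ ≤ _ := Finset.le_sup
                (f := fun y => ((t.filter (fun j => X j = y)).sup fun j => u j / X j j) * y k)
                (Finset.mem_image_of_mem X hkt)
        · have : u k = 0 := by simpa using hk
          rw [this]; exact zero_le
      · apply Finset.sup_le
        intro y hy
        obtain ⟨j, hjt, rfl⟩ := Finset.mem_image.1 hy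
        show (Finset.filter (fun i => X i = X j) t).sup (fun i => u i / X i i) * X j k ≤ u k
        by_cases hyk : X j k = 0
        · rw [hyk, mul_zero]; exact zero_le
        · rw [← le_div_iff₀ (pos_iff_ne_zero.2 hyk)]
          apply Finset.sup_le
          intro i hi
          obtain ⟨hit, hXi⟩ := Finset.mem_filter.1 hi
          have hui : 0 < u i := by
            rw [ht] at hit; exact (Finset.mem_filter.1 hit).2
          obtain ⟨_, hXii, hXile⟩ := hX i hui
          have hres : (X i i)⁻¹ * X i k ≤ (u i)⁻¹ * u k := hXile k
          rw [le_div_iff₀ (pos_iff_ne_zero.2 hyk), ← hXi]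
          calc u i / X i i * X i k = u i * ((X i i)⁻¹ * X i k) := by
                rw [div_eq_mul_inv, mul_assoc]
            _ ≤ u i * ((u i)⁻¹ * u k) := mul_le_mul_right hres _
            _ = u k := by rw [← mul_assoc, mul_inv_cancel₀ (ne_of_gt hui), one_mul]

/-- for a generating set `T` of the max cone `K`, `U ⊆ T` and
`S = T \ U`, the set `S` generates `K` iff each `u ∈ T` satisfies: for every
`j ∈ supp u` there is `x ∈ S` with `j ∈ supp x` and `x(j) ≤ u(j)`. -/
theorem stmt2 {n : ℕ} (K : Set (Fin n → ℝ≥0)) (hK : MaxCone K)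
    (T U S : Set (Fin n → ℝ≥0)) (hT : MaxSpan T = K) (hU : U ⊆ T)
    (hS : S = T \ U) :
    MaxSpan S = K ↔
      ∀ u ∈ T, ∀ j ∈ supp u, ∃ x ∈ S, j ∈ supp x ∧ rescale x j ≤ rescale u j := by
  constructor
  · intro hgen u hu j hj
    have huS : u ∈ MaxSpan S := by
      rw [hgen, ← hT]
      exact mem_maxSpan_self hu
    exact (mem_maxSpan_iff S u).1 huS j hj
  · intro h
    apply Set.Subset.antisymm
    · rw [← hT]
      exact maxSpan_mono (by rw [hS]; exact Set.diff_subset)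
    · intro v hv
      rw [← hT, mem_maxSpan_iff] at hv
      rw [mem_maxSpan_iff]
      intro j hj
      obtain ⟨w, hwT, hjw, hwle⟩ := hv j hj
      obtain ⟨x, hxS, hjx, hxle⟩ := h w hwT j hjw
      exact ⟨x, hxS, hjx, hxle.trans hwle⟩
end

section
/- For any max cone K in ℝ≥0^n, the set of scaled extremals of K is independent. -/
open scoped NNReal

lemma sup_mem_cone {n : ℕ} {K : Set (Fin n → ℝ≥0)} (hK : MaxCone K)
    (F : Finset (Fin n → ℝ≥0)) (f : (Fin n → ℝ≥0) → (Fin n → ℝ≥0))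
    (hf : ∀ a ∈ F, f a ∈ K) : F.sup f ∈ K := by
  induction F using Finset.induction_on with
  | empty =>
    simpa [Finset.sup_empty, show (⊥ : Fin n → ℝ≥0) = 0 from by ext; simp] using hK.1
  | @insert a F ha ih =>
    rw [Finset.sup_insert]
    exact hK.2.1 _ (hf a (Finset.mem_insert_self a F)) _
      (ih fun b hb => hf b (Finset.mem_insert_of_mem hb))

lemma extremal_sup {n : ℕ} {K : Set (Fin n → ℝ≥0)} (hK : MaxCone K)
    {u : Fin n → ℝ≥0} (hu : IsExtremal K u)
    (F : Finset (Fin n → ℝ≥0)) (f : (Fin n → ℝ≥0) → (Fin n → ℝ≥0))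
    (hf : ∀ a ∈ F, f a ∈ K) (heq : u = F.sup f) :
    u = ⊥ ∨ ∃ a ∈ F, u = f a := by
  induction F using Finset.induction_on with
  | empty =>
    left; simpa [Finset.sup_empty] using heq
  | @insert a F ha ih =>
    rw [Finset.sup_insert] at heq
    have h1 : f a ∈ K := hf a (Finset.mem_insert_self a F)
    have h2 : F.sup f ∈ K := sup_mem_cone hK F f
      fun b hb => hf b (Finset.mem_insert_of_mem hb)
    rcases hu.2 _ h1 _ h2 heq with h | h
    · exact Or.inr ⟨a, Finset.mem_insert_self a F, h⟩
    · rcases ih (fun b hb => hf b (Finset.mem_insert_of_mem hb)) h with h' | ⟨b, hb, hb'⟩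
      · exact Or.inl h'
      · exact Or.inr ⟨b, Finset.mem_insert_of_mem hb, hb'⟩

/-- the set of scaled extremals of a max cone is independent. -/
theorem stmt4 {n : ℕ} (K : Set (Fin n → ℝ≥0)) (hK : MaxCone K) :
    IndependentSet {x | IsExtremal K x ∧ Scaled x} := by
  intro x hx hmem
  obtain ⟨hxe, hxs⟩ := hx
  obtain ⟨F, lam, hFS, heq⟩ := hmem
  replace hxs : (⨆ i, x i) = 1 := hxs
  have hne : Nonempty (Fin n) := by
    by_contra h
    rw [not_nonempty_iff] at h
    rw [ciSup_of_empty] at hxs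
    simp at hxs
  have hf : ∀ a ∈ F, lam a • a ∈ K := by
    intro a haF
    have := hFS haF
    exact hK.2.2 (lam a) a this.1.1.1
  rcases extremal_sup hK hxe F _ hf heq with h0 | ⟨a, haF, hxa⟩
  · rw [h0] at hxs
    simp [Pi.bot_apply, ciSup_const] at hxs
  · obtain ⟨⟨hae, has⟩, hax⟩ := hFS haF
    have hbdd : ∀ (v : Fin n → ℝ≥0) (i : Fin n), v i ≤ ⨆ j, v j :=
      fun v i => le_ciSup (Set.Finite.bddAbove (Set.finite_range v)) i
    set l := lam a with hl
    have hxi : ∀ i, x i = l * a i := fun i => by rw [hxa]; rfl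
    have hl1 : (1 : ℝ≥0) ≤ l := by
      rw [← hxs]
      refine ciSup_le fun i => ?_
      rw [hxi i]
      calc l * a i ≤ l * 1 := by
            have := hbdd a i; rw [has] at this
            exact mul_le_mul_right this l
        _ = l := mul_one l
    have hl0 : l ≠ 0 := fun h => by simp [h] at hl1
    have hl2 : l ≤ 1 := by
      have hinv : (1 : ℝ≥0) ≤ l⁻¹ := by
        rw [← has]
        refine ciSup_le fun i => ?_
        have : a i = l⁻¹ * x i := by
          rw [hxi i, ← mul_assoc, inv_mul_cancel₀ hl0, one_mul]
        rw [this]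
        calc l⁻¹ * x i ≤ l⁻¹ * 1 := by
              have := hbdd x i; rw [hxs] at this
              exact mul_le_mul_right this l⁻¹
          _ = l⁻¹ := mul_one l⁻¹
      have := inv_anti₀ (by norm_num) hinv
      simpa using this
    have hleq : l = 1 := le_antisymm hl2 hl1
    exact hax (funext fun i => by rw [hxi i, hleq, one_mul])
end
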